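/- Suppose λ_* ∈ Λ and c_* > 0 satisfy Θ(λ_*, c_*) = f_*, axioms (A1), (A2), (A3), (A7) hold, and the function c ↦ Φ(y,λ_*,c) is strictly increasing on its effective domain for every y ∉ K and on the set {c : -∞ < Φ(y,λ_*,c) < 0} for every y ∈ K. Then for every c > c_*(λ_*), a point x ∈ Q attains the infimum inf_{x∈Q} 𝓛(x,λ_*,c) if and only if x is a globally optimal solution of the primal problem. -/

import Mathlib

open Filter Topology Metric Set

noncomputable section

variable {X Y : Type*} [NormedAddCommGroup X] [NormedSpace ℝ X]
  [NormedAddCommGroup Y] [NormedSpace ℝ Y]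

/-- Augmented Lagrangian `𝓛(x, λ, c) = f(x) + Φ(G(x), λ, c)`. -/
def lagr (f : X → EReal) (G : X → Y) (Φ : Y → (Y →L[ℝ] ℝ) → ℝ → EReal)
    (x : X) (l : Y →L[ℝ] ℝ) (c : ℝ) : EReal :=
  f x + Φ (G x) l c

/-- Augmented dual function `Θ(λ, c) = inf_{x ∈ Q} 𝓛(x, λ, c)`. -/
def theta (Q : Set X) (f : X → EReal) (G : X → Y)
    (Φ : Y → (Y →L[ℝ] ℝ) → ℝ → EReal) (l : Y →L[ℝ] ℝ) (c : ℝ) : EReal :=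
  ⨅ x ∈ Q, lagr f G Φ x l c

/-- Optimal value of the primal problem `min f(x) s.t. G(x) ∈ K, x ∈ Q`. -/
def primalVal (Q : Set X) (K : Set Y) (f : X → EReal) (G : X → Y) : EReal :=
  ⨅ x ∈ {x ∈ Q | G x ∈ K}, f x

/-- Optimal value of the dual problem `max Θ(λ, c) over λ ∈ Λ, c > 0`. -/
def dualVal (Q : Set X) (Λ : Set (Y →L[ℝ] ℝ)) (f : X → EReal) (G : X → Y)
    (Φ : Y → (Y →L[ℝ] ℝ) → ℝ → EReal) : EReal :=
  ⨆ l ∈ Λ, ⨆ c ∈ Ioi (0 : ℝ), theta Q f G Φ l c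

/-- `(l, c)` is a globally optimal solution of the dual problem. -/
def DualOpt (Q : Set X) (Λ : Set (Y →L[ℝ] ℝ)) (f : X → EReal) (G : X → Y)
    (Φ : Y → (Y →L[ℝ] ℝ) → ℝ → EReal) (l : Y →L[ℝ] ℝ) (c : ℝ) : Prop :=
  l ∈ Λ ∧ 0 < c ∧ ∀ l' ∈ Λ, ∀ c' > (0 : ℝ), theta Q f G Φ l' c' ≤ theta Q f G Φ l c

/-- The saddle point inequalities hold for every `c ≥ c₀`. -/
def SaddleFrom (Q : Set X) (Λ : Set (Y →L[ℝ] ℝ)) (f : X → EReal) (G : X → Y)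
    (Φ : Y → (Y →L[ℝ] ℝ) → ℝ → EReal) (x₀ : X) (l₀ : Y →L[ℝ] ℝ) (c₀ : ℝ) : Prop :=
  ∀ c ≥ c₀, (⨆ l ∈ Λ, lagr f G Φ x₀ l c) ≤ lagr f G Φ x₀ l₀ c ∧
    lagr f G Φ x₀ l₀ c ≤ (⨅ x ∈ Q, lagr f G Φ x l₀ c) ∧
    (⨅ x ∈ Q, lagr f G Φ x l₀ c) < ⊤

/-- `(x₀, l₀)` is a global saddle point of the augmented Lagrangian. -/
def SaddlePt (Q : Set X) (Λ : Set (Y →L[ℝ] ℝ)) (f : X → EReal) (G : X → Y)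
    (Φ : Y → (Y →L[ℝ] ℝ) → ℝ → EReal) (x₀ : X) (l₀ : Y →L[ℝ] ℝ) : Prop :=
  x₀ ∈ Q ∧ l₀ ∈ Λ ∧ ∃ c₀ > (0 : ℝ), SaddleFrom Q Λ f G Φ x₀ l₀ c₀

/-- The least exact penalty parameter `c_*(x₀, l₀)` of a global saddle point. -/
def saddleCStar (Q : Set X) (Λ : Set (Y →L[ℝ] ℝ)) (f : X → EReal) (G : X → Y)
    (Φ : Y → (Y →L[ℝ] ℝ) → ℝ → EReal) (x₀ : X) (l₀ : Y →L[ℝ] ℝ) : ℝ :=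
  sInf {c₀ : ℝ | 0 < c₀ ∧ SaddleFrom Q Λ f G Φ x₀ l₀ c₀}

/-- `x₀` is a globally optimal solution of the primal problem. -/
def PrimalOpt (Q : Set X) (K : Set Y) (f : X → EReal) (G : X → Y) (x₀ : X) : Prop :=
  x₀ ∈ Q ∧ G x₀ ∈ K ∧ ∀ x ∈ Q, G x ∈ K → f x₀ ≤ f x

lemma ereal_add_eq_coe {a b : EReal} {r : ℝ} (h : a + b = (r:EReal)) :
    ∃ p q : ℝ, a = p ∧ b = q ∧ p + q = r := by
  induction a using EReal.rec <;> induction b using EReal.rec <;>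
    simp_all [← EReal.coe_add, EReal.coe_eq_coe_iff]

/-- Suppose `Θ(λ_*, c_*) = f_*` for some `λ_* ∈ Λ`, `c_* > 0`, axioms (A1)–(A3), (A7)
hold, the zero duality gap property holds, a primal globally optimal solution exists,
and `c ↦ Φ(y, λ_*, c)` is strictly increasing on its effective domain for `y ∉ K` and
on `{c : -∞ < Φ(y,λ_*,c) < 0}` for `y ∈ K`. Then for every `c` above the penalty map
value `c_*(λ_*)`, a point `x ∈ Q` minimizes `𝓛(·, λ_*, c)` over `Q` if and only if `x`
is a globally optimal solution of the primal problem. -/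
theorem exact_penalty_representation_minimizers
    (Q : Set X) (K : Set Y) (Λ : Set (Y →L[ℝ] ℝ))
    (f : X → EReal) (G : X → Y) (Φ : Y → (Y →L[ℝ] ℝ) → ℝ → EReal)
    (hQne : Q.Nonempty) (hQclosed : IsClosed Q)
    (hKclosed : IsClosed K) (hKconv : Convex ℝ K)
    (hKcone : ∀ y ∈ K, ∀ t : ℝ, 0 ≤ t → t • y ∈ K)
    (hfeas : {x ∈ Q | G x ∈ K}.Nonempty)
    (hfin : ∃ r : ℝ, primalVal Q K f G = (r : EReal))
    (hA1 : ∀ y ∈ K, ∀ l ∈ Λ, ∀ c : ℝ, 0 < c → Φ y l c ≤ 0)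
    (hA2 : ∀ y ∈ K, ∀ c : ℝ, 0 < c → ∃ l ∈ Λ, 0 ≤ Φ y l c)
    (hA3 : ∀ y ∉ K, ∀ c : ℝ, 0 < c → ∃ l ∈ Λ,
      Tendsto (fun t : ℝ => Φ y (t • l) c) atTop (𝓝 (⊤ : EReal)))
    (hA7 : ∀ y : Y, ∀ l ∈ Λ, ∀ c₁ c₂ : ℝ, 0 < c₁ → c₁ ≤ c₂ → Φ y l c₁ ≤ Φ y l c₂)
    (hgap : dualVal Q Λ f G Φ = primalVal Q K f G)
    (hprimal : ∃ x₀, PrimalOpt Q K f G x₀)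
    (l₀ : Y →L[ℝ] ℝ) (hl₀ : l₀ ∈ Λ) (c₀ : ℝ) (hc₀ : 0 < c₀)
    (hval : theta Q f G Φ l₀ c₀ = primalVal Q K f G)
    (hstrict : ∀ y : Y,
      (y ∉ K → ∀ c₁ c₂ : ℝ, 0 < c₁ → c₁ < c₂ →
        Φ y l₀ c₁ ≠ ⊥ → Φ y l₀ c₁ ≠ ⊤ → Φ y l₀ c₂ ≠ ⊥ → Φ y l₀ c₂ ≠ ⊤ →
        Φ y l₀ c₁ < Φ y l₀ c₂) ∧
      (y ∈ K → ∀ c₁ c₂ : ℝ, 0 < c₁ → c₁ < c₂ →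
        Φ y l₀ c₁ ≠ ⊥ → Φ y l₀ c₁ < 0 → Φ y l₀ c₂ ≠ ⊥ → Φ y l₀ c₂ < 0 →
        Φ y l₀ c₁ < Φ y l₀ c₂)) :
    ∀ c : ℝ, sInf {c' : ℝ | DualOpt Q Λ f G Φ l₀ c'} < c →
      ∀ x ∈ Q, ((∀ x' ∈ Q, lagr f G Φ x l₀ c ≤ lagr f G Φ x' l₀ c) ↔
        PrimalOpt Q K f G x) := by
  obtain ⟨r, hr⟩ := hfin
  -- theta is ≤ primalVal for all c > 0
  have hthle : ∀ c : ℝ, 0 < c → theta Q f G Φ l₀ c ≤ (r : EReal) := by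
    intro c hc
    rw [← hr, ← hgap]
    exact le_iSup₂_of_le l₀ hl₀ (le_iSup₂_of_le c hc le_rfl)
  -- theta monotone in c
  have hmono : ∀ c₁ c₂ : ℝ, 0 < c₁ → c₁ ≤ c₂ →
      theta Q f G Φ l₀ c₁ ≤ theta Q f G Φ l₀ c₂ := by
    intro c₁ c₂ h1 h12
    refine le_iInf₂ fun x hx => (iInf₂_le x hx).trans ?_
    exact add_le_add le_rfl (hA7 (G x) l₀ hl₀ c₁ c₂ h1 h12)
  -- the set of dual-optimal c' for l₀
  set S : Set ℝ := {c' : ℝ | DualOpt Q Λ f G Φ l₀ c'} with hS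
  have hc₀S : c₀ ∈ S := by
    refine ⟨hl₀, hc₀, fun l' hl' c' hc' => ?_⟩
    rw [hval, ← hgap]
    exact le_iSup₂_of_le l' hl' (le_iSup₂_of_le c' hc' le_rfl)
  have hSval : ∀ c' ∈ S, 0 < c' ∧ theta Q f G Φ l₀ c' = (r : EReal) := by
    rintro c' ⟨-, hc'pos, hopt⟩
    refine ⟨hc'pos, le_antisymm (hthle c' hc'pos) ?_⟩
    rw [← hr, ← hgap]
    exact iSup₂_le fun l hl => iSup₂_le fun c hc => hopt l hl c hc
  intro c hcS x hxQ
  obtain ⟨c', hc'S, hc'c⟩ := exists_lt_of_csInf_lt ⟨c₀, hc₀S⟩ hcS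
  obtain ⟨hc'pos, hth'⟩ := hSval c' hc'S
  have hcpos : 0 < c := hc'pos.trans hc'c
  have hthc : theta Q f G Φ l₀ c = (r : EReal) :=
    le_antisymm (hthle c hcpos) (hth' ▸ hmono c' c hc'pos hc'c.le)
  -- f x = r for any primal optimal x
  constructor
  · -- minimizer → primal opt
    intro hmin
    have hLeq : lagr f G Φ x l₀ c = (r : EReal) := by
      refine le_antisymm ?_ (hthc ▸ iInf₂_le x hxQ)
      rw [← hthc]
      exact le_iInf₂ hmin
    have hLc' : lagr f G Φ x l₀ c' = (r : EReal) := by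
      refine le_antisymm ?_ (hth' ▸ iInf₂_le x hxQ)
      rw [← hLeq]
      exact add_le_add le_rfl (hA7 (G x) l₀ hl₀ c' c hc'pos hc'c.le)
    obtain ⟨p, q, hfp, hq, hpq⟩ := ereal_add_eq_coe hLeq
    obtain ⟨p', q', hfp', hq', hpq'⟩ := ereal_add_eq_coe hLc'
    rw [hfp] at hfp'
    have hpp : p' = p := by exact_mod_cast hfp'.symm
    have hqq : q' = q := by
      rw [hpp] at hpq'; linarith
    -- G x ∈ K
    have hGK : G x ∈ K := by
      by_contra hGK
      have := (hstrict (G x)).1 hGK c' c hc'pos hc'c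
        (hq' ▸ EReal.coe_ne_bot q') (hq' ▸ EReal.coe_ne_top q')
        (hq ▸ EReal.coe_ne_bot q) (hq ▸ EReal.coe_ne_top q)
      rw [hq, hq', hqq] at this
      exact lt_irrefl _ this
    -- Φ(G x, l₀, c) = 0
    have hqle : (q : EReal) ≤ 0 := hq ▸ hA1 (G x) hGK l₀ hl₀ c hcpos
    have hq0 : q = 0 := by
      by_contra hq0
      have hqlt : (q : EReal) < 0 := lt_of_le_of_ne hqle (by exact_mod_cast hq0)
      have := (hstrict (G x)).2 hGK c' c hc'pos hc'c
        (hq' ▸ EReal.coe_ne_bot q') (by rw [hq', hqq]; exact hqlt)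
        (hq ▸ EReal.coe_ne_bot q) (hq ▸ hqlt)
      rw [hq, hq', hqq] at this
      exact lt_irrefl _ this
    have hfxr : f x = (r : EReal) := by rw [hfp]; norm_cast; linarith
    exact ⟨hxQ, hGK, fun y hyQ hyK => by
      rw [hfxr, ← hr]; exact iInf₂_le y ⟨hyQ, hyK⟩⟩
  · -- primal opt → minimizer
    rintro ⟨-, hGK, hopt⟩ x' hx'
    have hfxr : f x = (r : EReal) := by
      refine le_antisymm ?_ (hr ▸ iInf₂_le x ⟨hxQ, hGK⟩)
      rw [← hr]
      exact le_iInf₂ fun y hy => hopt y hy.1 hy.2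
    calc lagr f G Φ x l₀ c ≤ f x + 0 :=
          add_le_add le_rfl (hA1 (G x) hGK l₀ hl₀ c hcpos)
      _ = (r : EReal) := by rw [add_zero, hfxr]
      _ = theta Q f G Φ l₀ c := hthc.symm
      _ ≤ lagr f G Φ x' l₀ c := iInf₂_le x' hx'
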